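/- arXiv:2408.14705 — 2 statements merged into one kernel-verified Lean document; each statement's English description precedes it below -/
import Mathlib

section
/- For any finite set S of N points in the plane with at most N−2 collinear, writing t_m for the number of lines through exactly m points of S, assume Hirzebruch's inequality t₂ + t₃ ≥ N + Σ_{m≥5}(m−4)t_m. Then for any 2-coloring of S into n green and N−n red points (with N = 2n−k), the number of lines that are 1-equichromatic with at most six points is at least (6n − k(k+3))/4. -/
open scoped Classical

/-- The finite set of lines determined by a finite point set `P` in the complex plane. -/
noncomputable def detLines (P : Finset (ℂ × ℂ)) : Finset (AffineSubspace ℂ (ℂ × ℂ)) :=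
  ((P ×ˢ P).filter fun pq => pq.1 ≠ pq.2).image fun pq => affineSpan ℂ {pq.1, pq.2}

lemma pair_finrank {p q : ℂ × ℂ} (h : p ≠ q) :
    Module.finrank ℂ (affineSpan ℂ ({p, q} : Set (ℂ × ℂ))).direction = 1 := by
  rw [direction_affineSpan, vectorSpan_pair]
  exact finrank_span_singleton (by simpa using sub_ne_zero.mpr h)

lemma mem_detLines {P : Finset (ℂ × ℂ)} {p q : ℂ × ℂ} (hp : p ∈ P) (hq : q ∈ P)
    (hpq : p ≠ q) : affineSpan ℂ {p, q} ∈ detLines P := by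
  refine Finset.mem_image.mpr ⟨(p, q), ?_, rfl⟩
  simp [hp, hq, hpq]

lemma line_unique {P : Finset (ℂ × ℂ)} {l : AffineSubspace ℂ (ℂ × ℂ)} (hl : l ∈ detLines P)
    {p q : ℂ × ℂ} (hp : p ∈ l) (hq : q ∈ l) (hpq : p ≠ q) :
    affineSpan ℂ {p, q} = l := by
  obtain ⟨⟨a, b⟩, hab, rfl⟩ := Finset.mem_image.mp hl
  simp only [Finset.mem_filter, Finset.mem_product] at hab
  have hle : affineSpan ℂ ({p, q} : Set (ℂ × ℂ)) ≤ affineSpan ℂ {a, b} := by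
    rw [affineSpan_le]
    rintro x (rfl | rfl) <;> simpa using ‹_›
  refine AffineSubspace.ext_of_direction_eq ?_
    ⟨p, mem_affineSpan ℂ (by simp), hle (mem_affineSpan ℂ (by simp))⟩
  exact Submodule.eq_of_le_of_finrank_le (AffineSubspace.direction_le hle)
    (by rw [pair_finrank hpq, pair_finrank hab.2])

/-- Every admissible set of pairs partitions by lines. -/
lemma pair_count (P : Finset (ℂ × ℂ)) (s : Finset ((ℂ × ℂ) × (ℂ × ℂ)))
    (hs : ∀ pq ∈ s, pq.1 ∈ P ∧ pq.2 ∈ P ∧ pq.1 ≠ pq.2) :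
    s.card = ∑ l ∈ detLines P, (s.filter fun pq => pq.1 ∈ l ∧ pq.2 ∈ l).card := by
  rw [Finset.card_eq_sum_card_fiberwise
    (f := fun pq => affineSpan ℂ {pq.1, pq.2}) (t := detLines P)
    (fun pq hpq => mem_detLines (hs pq hpq).1 (hs pq hpq).2.1 (hs pq hpq).2.2)]
  refine Finset.sum_congr rfl fun l hl => ?_
  congr 1
  apply Finset.filter_congr
  intro pq hpq
  constructor
  · rintro rfl
    exact ⟨mem_affineSpan ℂ (by simp), mem_affineSpan ℂ (by simp)⟩
  · rintro ⟨h1, h2⟩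
    exact line_unique hl h1 h2 (hs pq hpq).2.2

lemma offDiag_filter_line (G : Finset (ℂ × ℂ)) (l : AffineSubspace ℂ (ℂ × ℂ)) :
    G.offDiag.filter (fun pq => pq.1 ∈ l ∧ pq.2 ∈ l)
      = (G.filter (fun p => p ∈ l)).offDiag := by
  ext ⟨a, b⟩
  simp [Finset.mem_offDiag]
  tauto

lemma prod_filter_line (G R : Finset (ℂ × ℂ)) (l : AffineSubspace ℂ (ℂ × ℂ)) :
    (G ×ˢ R).filter (fun pq => pq.1 ∈ l ∧ pq.2 ∈ l)
      = (G.filter (fun p => p ∈ l)) ×ˢ (R.filter (fun p => p ∈ l)) := by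
  ext ⟨a, b⟩
  simp [Finset.mem_product]
  tauto

lemma cast_offDiag_card (s : Finset (ℂ × ℂ)) :
    (s.offDiag.card : ℤ) = (s.card : ℤ) * s.card - s.card := by
  rw [Finset.offDiag_card]
  have h : s.card ≤ s.card * s.card := by nlinarith [Nat.zero_le s.card]
  push_cast [Nat.cast_sub h]
  ring

lemma keyineq (i j : ℕ) (h : 2 ≤ i + j) :
    2*(if i+j = 2 then (1:ℤ) else 0) + 2*(if i+j = 3 then (1:ℤ) else 0)
      - 2*(if 5 ≤ i+j then ((i:ℤ)+j)-4 else 0) + (((i:ℤ)+j) - ((i:ℤ)-j)^2)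
    ≤ 4 * (if 1 ≤ i ∧ 1 ≤ j ∧ i ≤ j+1 ∧ j ≤ i+1 ∧ i+j ≤ 6 then (1:ℤ) else 0) := by
  by_cases h6 : i + j ≤ 6
  · have hi : i ≤ 6 := by omega
    have hj : j ≤ 6 := by omega
    interval_cases i <;> interval_cases j <;> norm_num
  · rw [if_neg (by omega), if_neg (by omega), if_pos (by omega), if_neg (by omega)]
    rcases eq_or_ne i j with rfl | hne
    · have h7 : (8:ℤ) ≤ (i:ℤ) + i := by exact_mod_cast (by omega : 8 ≤ i + i)
      have hz : ((i:ℤ) - i)^2 = 0 := by ring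
      linarith
    · have hd : ((i:ℤ) - j) ≠ 0 := sub_ne_zero.mpr (by exact_mod_cast hne)
      have h1 : 1 ≤ ((i:ℤ) - j)^2 := by
        rcases hd.lt_or_gt with h' | h' <;> nlinarith
      have : 7 ≤ (i : ℤ) + j := by exact_mod_cast Nat.lt_of_not_le h6
      nlinarith

/-- Theorem 6 of the paper: let `S` be a set of `N = 2n - k` points in `ℂ²` with at most
`N - 2` collinear, satisfying Hirzebruch's inequality `t₂ + t₃ ≥ N + Σ_{m≥5}(m-4)tₘ`.
Then for any 2-coloring of `S` into `n` green and `n - k` red points, the number of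
1-equichromatic lines through at most six points is at least `(6n - k(k+3))/4`. -/
theorem stmt_12 (N n k : ℕ) (hk : k ≤ n) (hN : N = 2 * n - k)
    (S G R : Finset (ℂ × ℂ)) (hS : S = G ∪ R) (hGR : Disjoint G R)
    (hG : G.card = n) (hR : R.card = n - k)
    (hcol : ∀ T : Finset (ℂ × ℂ), T ⊆ S → Collinear ℂ (T : Set (ℂ × ℂ)) →
      (T.card : ℤ) ≤ (N : ℤ) - 2)
    (hHir : (((detLines S).filter (fun l => (S.filter (fun p => p ∈ l)).card = 2)).card : ℤ)
          + (((detLines S).filter (fun l => (S.filter (fun p => p ∈ l)).card = 3)).card : ℤ)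
        ≥ (N : ℤ) + ∑ l ∈ detLines S,
            (if 5 ≤ (S.filter (fun p => p ∈ l)).card
              then ((S.filter (fun p => p ∈ l)).card : ℤ) - 4 else 0)) :
    (((detLines S).filter (fun l =>
        1 ≤ (G.filter (fun p => p ∈ l)).card ∧ 1 ≤ (R.filter (fun p => p ∈ l)).card
        ∧ (G.filter (fun p => p ∈ l)).card ≤ (R.filter (fun p => p ∈ l)).card + 1
        ∧ (R.filter (fun p => p ∈ l)).card ≤ (G.filter (fun p => p ∈ l)).card + 1
        ∧ (G.filter (fun p => p ∈ l)).card + (R.filter (fun p => p ∈ l)).card ≤ 6)).card : ℚ)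
      ≥ (6 * (n : ℚ) - (k : ℚ) * (k + 3)) / 4 := by
  have hGS : G ⊆ S := hS ▸ Finset.subset_union_left
  have hRS : R ⊆ S := hS ▸ Finset.subset_union_right
  set cG : AffineSubspace ℂ (ℂ × ℂ) → ℕ := fun l => (G.filter (fun p => p ∈ l)).card with hcG
  set cR : AffineSubspace ℂ (ℂ × ℂ) → ℕ := fun l => (R.filter (fun p => p ∈ l)).card with hcR
  have hsplit : ∀ l : AffineSubspace ℂ (ℂ × ℂ),
      (S.filter (fun p => p ∈ l)).card = cG l + cR l := by
    intro l
    rw [hS, Finset.filter_union,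
      Finset.card_union_of_disjoint (Finset.disjoint_filter_filter hGR)]
  -- every determined line has at least two points of S
  have hmem2 : ∀ l ∈ detLines S, 2 ≤ cG l + cR l := by
    intro l hl
    rw [← hsplit]
    obtain ⟨⟨p, q⟩, hab, rfl⟩ := Finset.mem_image.mp hl
    simp only [Finset.mem_filter, Finset.mem_product] at hab
    have hsub : ({p, q} : Finset (ℂ × ℂ)) ⊆ S.filter (fun x => x ∈ affineSpan ℂ {p, q}) := by
      intro x hx
      simp only [Finset.mem_insert, Finset.mem_singleton] at hx
      rcases hx with rfl | rfl
      · exact Finset.mem_filter.mpr ⟨hab.1.1, mem_affineSpan ℂ (by simp)⟩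
      · exact Finset.mem_filter.mpr ⟨hab.1.2, mem_affineSpan ℂ (by simp)⟩
    calc 2 = ({p, q} : Finset (ℂ × ℂ)).card := by
            rw [Finset.card_insert_of_notMem (by simpa using hab.2), Finset.card_singleton]
      _ ≤ _ := Finset.card_le_card hsub
  -- pair-counting identities
  have hGGz : (G.card : ℤ) * G.card - G.card
      = ∑ l ∈ detLines S, ((cG l : ℤ) * cG l - cG l) := by
    have hp := pair_count S G.offDiag (by
      intro pq hpq
      rw [Finset.mem_offDiag] at hpq
      exact ⟨hGS hpq.1, hGS hpq.2.1, hpq.2.2⟩)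
    calc (G.card : ℤ) * G.card - G.card = (G.offDiag.card : ℤ) := (cast_offDiag_card G).symm
      _ = ∑ l ∈ detLines S, ((G.offDiag.filter fun pq => pq.1 ∈ l ∧ pq.2 ∈ l).card : ℤ) := by
          rw [hp]; push_cast; rfl
      _ = _ := Finset.sum_congr rfl fun l _ => by
          rw [offDiag_filter_line, cast_offDiag_card]
  have hRRz : (R.card : ℤ) * R.card - R.card
      = ∑ l ∈ detLines S, ((cR l : ℤ) * cR l - cR l) := by
    have hp := pair_count S R.offDiag (by
      intro pq hpq
      rw [Finset.mem_offDiag] at hpq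
      exact ⟨hRS hpq.1, hRS hpq.2.1, hpq.2.2⟩)
    calc (R.card : ℤ) * R.card - R.card = (R.offDiag.card : ℤ) := (cast_offDiag_card R).symm
      _ = ∑ l ∈ detLines S, ((R.offDiag.filter fun pq => pq.1 ∈ l ∧ pq.2 ∈ l).card : ℤ) := by
          rw [hp]; push_cast; rfl
      _ = _ := Finset.sum_congr rfl fun l _ => by
          rw [offDiag_filter_line, cast_offDiag_card]
  have hGRz : (G.card : ℤ) * R.card = ∑ l ∈ detLines S, ((cG l : ℤ) * cR l) := by
    have hp := pair_count S (G ×ˢ R) (by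
      intro pq hpq
      rw [Finset.mem_product] at hpq
      exact ⟨hGS hpq.1, hRS hpq.2, fun h => Finset.disjoint_left.mp hGR hpq.1 (h ▸ hpq.2)⟩)
    calc (G.card : ℤ) * R.card = ((G ×ˢ R).card : ℤ) := by rw [Finset.card_product]; push_cast; ring
      _ = ∑ l ∈ detLines S, (((G ×ˢ R).filter fun pq => pq.1 ∈ l ∧ pq.2 ∈ l).card : ℤ) := by
          rw [hp]; push_cast; rfl
      _ = _ := Finset.sum_congr rfl fun l _ => by
          rw [prod_filter_line, Finset.card_product]; push_cast; ring
  -- numeric values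
  have hk2 : k ≤ 2 * n := le_trans hk (by omega)
  have hNz : (N : ℤ) = 2 * n - k := by rw [hN]; push_cast [Nat.cast_sub hk2]; ring
  have hRc : (R.card : ℤ) = (n : ℤ) - k := by rw [hR]; push_cast [Nat.cast_sub hk]; ring
  have hGc : (G.card : ℤ) = (n : ℤ) := by rw [hG]
  -- the key identity
  have hId : ∑ l ∈ detLines S, (((cG l : ℤ) + cR l) - ((cG l : ℤ) - cR l)^2)
      = (N : ℤ) - (k : ℤ)^2 := by
    have e : ∀ l ∈ detLines S, (((cG l : ℤ) + cR l) - ((cG l : ℤ) - cR l)^2)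
        = -((cG l : ℤ) * cG l - cG l) - ((cR l : ℤ) * cR l - cR l)
          + 2 * ((cG l : ℤ) * cR l) := fun l _ => by ring
    rw [Finset.sum_congr rfl e]
    rw [Finset.sum_add_distrib, Finset.sum_sub_distrib, Finset.sum_neg_distrib,
      ← Finset.mul_sum, ← hGGz, ← hRRz, ← hGRz, hGc, hRc, hNz]
    ring
  -- rewrite Hirzebruch
  simp_rw [hsplit] at hHir
  rw [Finset.card_filter, Finset.card_filter] at hHir
  push_cast at hHir
  -- combine into the weighted sum
  set W : AffineSubspace ℂ (ℂ × ℂ) → ℤ := fun l =>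
    2*(if cG l + cR l = 2 then (1:ℤ) else 0) + 2*(if cG l + cR l = 3 then (1:ℤ) else 0)
      - 2*(if 5 ≤ cG l + cR l then ((cG l : ℤ) + cR l) - 4 else 0)
      + (((cG l : ℤ) + cR l) - ((cG l : ℤ) - cR l)^2) with hW
  have hWsum : 3 * (N : ℤ) - (k : ℤ)^2 ≤ ∑ l ∈ detLines S, W l := by
    have hdist : ∑ l ∈ detLines S, W l
        = 2 * (∑ l ∈ detLines S, (if cG l + cR l = 2 then (1:ℤ) else 0))
          + 2 * (∑ l ∈ detLines S, (if cG l + cR l = 3 then (1:ℤ) else 0))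
          - 2 * (∑ l ∈ detLines S, (if 5 ≤ cG l + cR l then ((cG l : ℤ) + cR l) - 4 else 0))
          + ∑ l ∈ detLines S, (((cG l : ℤ) + cR l) - ((cG l : ℤ) - cR l)^2) := by
      rw [Finset.mul_sum, Finset.mul_sum, Finset.mul_sum, ← Finset.sum_add_distrib,
        ← Finset.sum_sub_distrib, ← Finset.sum_add_distrib]
    rw [hdist, hId]
    linarith
  -- per-line bound
  have hperline : ∑ l ∈ detLines S, W l
      ≤ ∑ l ∈ detLines S, 4 * (if 1 ≤ cG l ∧ 1 ≤ cR l ∧ cG l ≤ cR l + 1 ∧ cR l ≤ cG l + 1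
          ∧ cG l + cR l ≤ 6 then (1:ℤ) else 0) :=
    Finset.sum_le_sum fun l hl => keyineq (cG l) (cR l) (hmem2 l hl)
  have hfinal : 3 * (N : ℤ) - (k : ℤ)^2
      ≤ 4 * (((detLines S).filter (fun l =>
          1 ≤ cG l ∧ 1 ≤ cR l ∧ cG l ≤ cR l + 1 ∧ cR l ≤ cG l + 1 ∧ cG l + cR l ≤ 6)).card : ℤ) := by
    have hcf : (((detLines S).filter (fun l =>
        1 ≤ cG l ∧ 1 ≤ cR l ∧ cG l ≤ cR l + 1 ∧ cR l ≤ cG l + 1 ∧ cG l + cR l ≤ 6)).card : ℤ)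
        = ∑ l ∈ detLines S, (if 1 ≤ cG l ∧ 1 ≤ cR l ∧ cG l ≤ cR l + 1 ∧ cR l ≤ cG l + 1
            ∧ cG l + cR l ≤ 6 then (1:ℤ) else 0) := by
      rw [Finset.card_filter]; push_cast; rfl
    rw [hcf, Finset.mul_sum]
    exact le_trans hWsum hperline
  -- conclude
  rw [ge_iff_le, div_le_iff₀ (by norm_num : (0:ℚ) < 4)]
  show 6 * (n:ℚ) - (k:ℚ) * ((k:ℚ) + 3)
      ≤ (((detLines S).filter (fun l =>
          1 ≤ cG l ∧ 1 ≤ cR l ∧ cG l ≤ cR l + 1 ∧ cR l ≤ cG l + 1 ∧ cG l + cR l ≤ 6)).card : ℚ) * 4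
  have hq : ((3 * (N : ℤ) - (k : ℤ)^2 : ℤ) : ℚ)
      ≤ ((4 * (((detLines S).filter (fun l =>
          1 ≤ cG l ∧ 1 ≤ cR l ∧ cG l ≤ cR l + 1 ∧ cR l ≤ cG l + 1 ∧ cG l + cR l ≤ 6)).card : ℤ) : ℤ) : ℚ) :=
    Int.cast_le.mpr hfinal
  have hNq : (N : ℚ) = 2 * (n:ℚ) - k := by exact_mod_cast hNz
  push_cast at hq
  rw [hNq] at hq
  linarith
end

section
/- For any finite set S of N points in ℂ² with at most (2/3)N collinear, writing t_m for the number of lines through exactly m points, assume the Bojanowski–Pokora inequality Σ_{m≥2}(4m − m²)t_m ≥ 4N. Then for any 2-coloring of S into n green and n−k red points (N = 2n−k), the number of 2-equichromatic lines through at most four points is at least (10n − k(k+5))/6. -/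
open scoped Classical

lemma line_unique_s13 {p q a b : ℂ × ℂ} (hpq : p ≠ q) (hp : p ∈ affineSpan ℂ ({a, b} : Set (ℂ × ℂ)))
    (hq : q ∈ affineSpan ℂ ({a, b} : Set (ℂ × ℂ))) :
    affineSpan ℂ ({p, q} : Set (ℂ × ℂ)) = affineSpan ℂ ({a, b} : Set (ℂ × ℂ)) := by
  have hle : affineSpan ℂ ({p, q} : Set (ℂ × ℂ)) ≤ affineSpan ℂ ({a, b} : Set (ℂ × ℂ)) := by
    apply affineSpan_le.2
    intro x hx
    rcases hx with rfl | hx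
    · exact hp
    · rcases hx with rfl; exact hq
  refine AffineSubspace.ext_of_direction_eq ?_ ⟨p, mem_affineSpan _ (by simp), hp⟩
  rw [direction_affineSpan, direction_affineSpan, vectorSpan_pair, vectorSpan_pair]
  have hdle : Submodule.span ℂ {p -ᵥ q} ≤ Submodule.span ℂ ({a -ᵥ b} : Set (ℂ × ℂ)) := by
    rw [← vectorSpan_pair, ← vectorSpan_pair, ← direction_affineSpan, ← direction_affineSpan]
    exact AffineSubspace.direction_le hle
  apply le_antisymm hdle
  have hmem : p -ᵥ q ∈ Submodule.span ℂ ({a -ᵥ b} : Set (ℂ × ℂ)) :=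
    hdle (Submodule.mem_span_singleton_self _)
  rw [Submodule.mem_span_singleton] at hmem
  obtain ⟨c, hc⟩ := hmem
  have hc0 : c ≠ 0 := by
    rintro rfl
    rw [zero_smul] at hc
    exact hpq (by rwa [eq_comm, vsub_eq_zero_iff_eq] at hc)
  rw [Submodule.span_singleton_le_iff_mem, ← hc, Submodule.mem_span_singleton]
  exact ⟨c⁻¹, by rw [smul_smul, inv_mul_cancel₀ hc0, one_smul]⟩

lemma unique_line (S : Finset (ℂ × ℂ)) {p q : ℂ × ℂ} (hp : p ∈ S) (hq : q ∈ S) (hpq : p ≠ q) :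
    (detLines S).filter (fun l => p ∈ l ∧ q ∈ l) = {affineSpan ℂ ({p, q} : Set (ℂ × ℂ))} := by
  apply Finset.eq_singleton_iff_unique_mem.2
  constructor
  · refine Finset.mem_filter.2 ⟨?_, mem_affineSpan _ (by simp), mem_affineSpan _ (by simp)⟩
    exact Finset.mem_image.2 ⟨(p, q), by simp [Finset.mem_filter, Finset.mem_product, hp, hq, hpq], rfl⟩
  · intro l hl
    rcases Finset.mem_filter.1 hl with ⟨hl1, hpl, hql⟩
    rcases Finset.mem_image.1 hl1 with ⟨⟨a, b⟩, _, rfl⟩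
    exact (line_unique_s13 hpq hpl hql).symm

lemma sum_card_pairs (S A B : Finset (ℂ × ℂ)) (hA : A ⊆ S) (hB : B ⊆ S) :
    ∑ l ∈ detLines S, (A.filter (fun p => p ∈ l)).card * (B.filter (fun p => p ∈ l)).card
    = ((A ×ˢ B).filter (fun pq => pq.1 ≠ pq.2)).card
      + ∑ l ∈ detLines S, ((A ∩ B).filter (fun p => p ∈ l)).card := by
  have key : ∀ l : AffineSubspace ℂ (ℂ × ℂ),
      (A.filter (fun p => p ∈ l)).card * (B.filter (fun p => p ∈ l)).card
      = (((A ×ˢ B).filter (fun pq => pq.1 ≠ pq.2)).filter (fun pq => pq.1 ∈ l ∧ pq.2 ∈ l)).card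
        + ((A ∩ B).filter (fun p => p ∈ l)).card := by
    intro l
    rw [← Finset.card_product]
    have h1 : (A.filter (fun p => p ∈ l)) ×ˢ (B.filter (fun p => p ∈ l))
        = ((A ×ˢ B).filter (fun pq => pq.1 ∈ l ∧ pq.2 ∈ l)) := by
      ext ⟨x, y⟩
      simp [Finset.mem_filter, Finset.mem_product]
      tauto
    rw [h1, ← Finset.card_filter_add_card_filter_not
      (s := (A ×ˢ B).filter (fun pq => pq.1 ∈ l ∧ pq.2 ∈ l)) (fun pq => pq.1 ≠ pq.2)]
    congr 1
    · congr 1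
      ext ⟨x, y⟩
      simp [Finset.mem_filter, Finset.mem_product]
      tauto
    · rw [← Finset.card_image_of_injective ((A ∩ B).filter (fun p => p ∈ l)) (f := fun p => (p, p))
        (fun x y h => (Prod.mk.injEq _ _ _ _ ▸ h).1)]
      congr 1
      ext ⟨x, y⟩
      simp only [Finset.mem_filter, Finset.mem_product, Finset.mem_image, Finset.mem_inter, not_not]
      constructor
      · rintro ⟨⟨⟨hx, hy⟩, hxl, hyl⟩, rfl⟩
        exact ⟨x, ⟨⟨hx, hy⟩, hxl⟩, rfl⟩
      · rintro ⟨z, ⟨⟨hz1, hz2⟩, hzl⟩, h⟩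
        obtain ⟨rfl, rfl⟩ := Prod.mk.injEq _ _ _ _ ▸ h
        exact ⟨⟨⟨hz1, hz2⟩, hzl, hzl⟩, rfl⟩
  simp only [key, Finset.sum_add_distrib]
  congr 1
  simp only [Finset.card_filter]
  rw [Finset.sum_comm, ← Finset.sum_filter]
  apply Finset.sum_congr rfl
  rintro ⟨p, q⟩ hpq
  simp only [Finset.mem_filter, Finset.mem_product] at hpq
  obtain ⟨⟨hpA, hqB⟩, hne⟩ := hpq
  have := unique_line S (hA hpA) (hB hqB) hne
  calc ∑ l ∈ detLines S, (if p ∈ l ∧ q ∈ l then 1 else 0)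
      = ((detLines S).filter (fun l => p ∈ l ∧ q ∈ l)).card := by
        rw [Finset.card_filter]
    _ = 1 := by rw [this, Finset.card_singleton]

lemma pointwise_bound (a b : ℕ) :
    5 * ((a : ℤ) + b) - ((a : ℤ) + b) ^ 2 - ((a : ℤ) - b) ^ 2
      ≤ if (a ≤ b + 2 ∧ b ≤ a + 2 ∧ a + b ≤ 4) then 6 else 0 := by
  by_cases h : a ≤ b + 2 ∧ b ≤ a + 2 ∧ a + b ≤ 4
  · rw [if_pos h]
    have h23 : (a : ℤ) + b ≤ 2 ∨ 3 ≤ (a : ℤ) + b := by omega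
    rcases h23 with h' | h' <;> nlinarith [sq_nonneg ((a : ℤ) - b), sq_nonneg ((a : ℤ) + b)]
  · rw [if_neg h]
    have h' : (3 : ℤ) + b ≤ a ∨ (3 : ℤ) + a ≤ b ∨ (5 : ℤ) ≤ a + b := by omega
    have h23 : (a : ℤ) + b ≤ 2 ∨ 3 ≤ (a : ℤ) + b := by omega
    rcases h' with h' | h' | h' <;> rcases h23 with h'' | h'' <;>
      nlinarith [sq_nonneg ((a : ℤ) - b), sq_nonneg ((a : ℤ) + b)]

set_option maxHeartbeats 1000000 in
/-- Theorem 7 of the paper: let `S` be a set of `N = 2n - k` points in `ℂ²` with at most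
`(2/3)N` collinear, satisfying the Bojanowski–Pokora inequality
`Σ_{m≥2}(4m - m²)tₘ ≥ 4N`. Then for any 2-coloring of `S` into `n` green and `n - k`
red points, the number of 2-equichromatic lines through at most four points is at least
`(10n - k(k+5))/6`. -/
theorem stmt_13 (N n k : ℕ) (hk : k ≤ n) (hN : N = 2 * n - k)
    (S G R : Finset (ℂ × ℂ)) (hS : S = G ∪ R) (hGR : Disjoint G R)
    (hG : G.card = n) (hR : R.card = n - k)
    (hcol : ∀ T : Finset (ℂ × ℂ), T ⊆ S → Collinear ℂ (T : Set (ℂ × ℂ)) →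
      3 * T.card ≤ 2 * N)
    (hBP : ∑ l ∈ detLines S,
        (4 * ((S.filter (fun p => p ∈ l)).card : ℤ)
          - ((S.filter (fun p => p ∈ l)).card : ℤ) ^ 2)
      ≥ 4 * (N : ℤ)) :
    (((detLines S).filter (fun l =>
        (G.filter (fun p => p ∈ l)).card ≤ (R.filter (fun p => p ∈ l)).card + 2
        ∧ (R.filter (fun p => p ∈ l)).card ≤ (G.filter (fun p => p ∈ l)).card + 2
        ∧ (G.filter (fun p => p ∈ l)).card + (R.filter (fun p => p ∈ l)).card ≤ 4)).card : ℚ)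
      ≥ (10 * (n : ℚ) - (k : ℚ) * (k + 5)) / 6 := by
  have hGS : G ⊆ S := hS ▸ Finset.subset_union_left
  have hRS : R ⊆ S := hS ▸ Finset.subset_union_right
  set L := detLines S with hL
  -- each line's total count
  have hm : ∀ l : AffineSubspace ℂ (ℂ × ℂ),
      (S.filter (fun p => p ∈ l)).card
        = (G.filter (fun p => p ∈ l)).card + (R.filter (fun p => p ∈ l)).card := by
    intro l
    rw [hS, Finset.filter_union, Finset.card_union_of_disjoint
      (Finset.disjoint_filter_filter hGR)]
  -- G-G pairs
  have hGGcard : ((G ×ˢ G).filter (fun pq => pq.1 ≠ pq.2)).card = n * n - n := by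
    have h : ((G ×ˢ G).filter (fun pq => pq.1 ≠ pq.2)) = G.offDiag := by
      ext ⟨x, y⟩
      simp [Finset.mem_offDiag, Finset.mem_filter, Finset.mem_product]
      tauto
    rw [h, Finset.offDiag_card, hG]
  have hRRcard : ((R ×ˢ R).filter (fun pq => pq.1 ≠ pq.2)).card
      = (n - k) * (n - k) - (n - k) := by
    have h : ((R ×ˢ R).filter (fun pq => pq.1 ≠ pq.2)) = R.offDiag := by
      ext ⟨x, y⟩
      simp [Finset.mem_offDiag, Finset.mem_filter, Finset.mem_product]
      tauto
    rw [h, Finset.offDiag_card, hR]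
  have hGRcard : ((G ×ˢ R).filter (fun pq => pq.1 ≠ pq.2)).card = n * (n - k) := by
    rw [Finset.filter_true_of_mem, Finset.card_product, hG, hR]
    rintro ⟨x, y⟩ hxy
    simp only [Finset.mem_product] at hxy
    exact fun hxyeq => (Finset.disjoint_left.1 hGR hxy.1) ((show x = y from hxyeq) ▸ hxy.2)
  have SGG := sum_card_pairs S G G hGS hGS
  have SRR := sum_card_pairs S R R hRS hRS
  have SGR := sum_card_pairs S G R hGS hRS
  rw [hGGcard, Finset.inter_self] at SGG
  rw [hRRcard, Finset.inter_self] at SRR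
  rw [hGRcard, Finset.disjoint_iff_inter_eq_empty.1 hGR] at SGR
  simp only [Finset.filter_empty, Finset.card_empty, Finset.sum_const_zero, add_zero] at SGR
  rw [← hL] at SGG SRR SGR
  -- integer versions
  have hnn : n ≤ n * n := by nlinarith
  have hqq : (n - k) ≤ (n - k) * (n - k) := by nlinarith
  have ZGG : ∑ l ∈ L, (((G.filter (fun p => p ∈ l)).card : ℤ) * (G.filter (fun p => p ∈ l)).card
      - (G.filter (fun p => p ∈ l)).card) = (n : ℤ) * n - n := by
    have h1 : (∑ l ∈ L, (G.filter (fun p => p ∈ l)).card * (G.filter (fun p => p ∈ l)).card) + n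
        = n * n + ∑ l ∈ L, (G.filter (fun p => p ∈ l)).card := by omega
    have h2 := congrArg (fun x : ℕ => (x : ℤ)) h1
    push_cast at h2
    rw [Finset.sum_sub_distrib]
    linarith
  have ZRR : ∑ l ∈ L, (((R.filter (fun p => p ∈ l)).card : ℤ) * (R.filter (fun p => p ∈ l)).card
      - (R.filter (fun p => p ∈ l)).card) = ((n : ℤ) - k) * ((n : ℤ) - k) - ((n : ℤ) - k) := by
    have h1 : (∑ l ∈ L, (R.filter (fun p => p ∈ l)).card * (R.filter (fun p => p ∈ l)).card) + (n - k)
        = (n - k) * (n - k) + ∑ l ∈ L, (R.filter (fun p => p ∈ l)).card := by omega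
    have h2 := congrArg (fun x : ℕ => (x : ℤ)) h1
    push_cast [Nat.cast_sub hk] at h2
    rw [Finset.sum_sub_distrib]
    linarith
  have ZGR : ∑ l ∈ L, (((G.filter (fun p => p ∈ l)).card : ℤ) * (R.filter (fun p => p ∈ l)).card)
      = (n : ℤ) * ((n : ℤ) - k) := by
    have h2 := congrArg (fun x : ℕ => (x : ℤ)) SGR
    push_cast [Nat.cast_sub hk] at h2
    linarith
  -- per-line expansion
  have hterm : ∀ l ∈ L,
      (5 * (((G.filter (fun p => p ∈ l)).card : ℤ) + (R.filter (fun p => p ∈ l)).card)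
        - (((G.filter (fun p => p ∈ l)).card : ℤ) + (R.filter (fun p => p ∈ l)).card) ^ 2
        - (((G.filter (fun p => p ∈ l)).card : ℤ) - (R.filter (fun p => p ∈ l)).card) ^ 2)
      = (4 * ((S.filter (fun p => p ∈ l)).card : ℤ) - ((S.filter (fun p => p ∈ l)).card : ℤ) ^ 2)
        - (((G.filter (fun p => p ∈ l)).card : ℤ) * (G.filter (fun p => p ∈ l)).card
            - (G.filter (fun p => p ∈ l)).card)
        - (((R.filter (fun p => p ∈ l)).card : ℤ) * (R.filter (fun p => p ∈ l)).card
            - (R.filter (fun p => p ∈ l)).card)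
        + 2 * (((G.filter (fun p => p ∈ l)).card : ℤ) * (R.filter (fun p => p ∈ l)).card) := by
    intro l _
    rw [hm l]
    push_cast
    ring
  have hNZ : (N : ℤ) = 2 * (n : ℤ) - k := by omega
  have main : 5 * (2 * (n : ℤ) - k) - (k : ℤ) ^ 2
      ≤ ∑ l ∈ L,
        (5 * (((G.filter (fun p => p ∈ l)).card : ℤ) + (R.filter (fun p => p ∈ l)).card)
        - (((G.filter (fun p => p ∈ l)).card : ℤ) + (R.filter (fun p => p ∈ l)).card) ^ 2
        - (((G.filter (fun p => p ∈ l)).card : ℤ) - (R.filter (fun p => p ∈ l)).card) ^ 2) := by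
    rw [Finset.sum_congr rfl hterm, Finset.sum_add_distrib, Finset.sum_sub_distrib,
      Finset.sum_sub_distrib, ← Finset.mul_sum]
    rw [ZGG, ZRR, ZGR]
    rw [hNZ] at hBP
    nlinarith [hBP]
  -- pointwise bound and conclusion
  have bound : ∑ l ∈ L,
        (5 * (((G.filter (fun p => p ∈ l)).card : ℤ) + (R.filter (fun p => p ∈ l)).card)
        - (((G.filter (fun p => p ∈ l)).card : ℤ) + (R.filter (fun p => p ∈ l)).card) ^ 2
        - (((G.filter (fun p => p ∈ l)).card : ℤ) - (R.filter (fun p => p ∈ l)).card) ^ 2)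
      ≤ 6 * ((L.filter (fun l =>
        (G.filter (fun p => p ∈ l)).card ≤ (R.filter (fun p => p ∈ l)).card + 2
        ∧ (R.filter (fun p => p ∈ l)).card ≤ (G.filter (fun p => p ∈ l)).card + 2
        ∧ (G.filter (fun p => p ∈ l)).card + (R.filter (fun p => p ∈ l)).card ≤ 4)).card : ℤ) := by
    calc ∑ l ∈ L,
        (5 * (((G.filter (fun p => p ∈ l)).card : ℤ) + (R.filter (fun p => p ∈ l)).card)
        - (((G.filter (fun p => p ∈ l)).card : ℤ) + (R.filter (fun p => p ∈ l)).card) ^ 2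
        - (((G.filter (fun p => p ∈ l)).card : ℤ) - (R.filter (fun p => p ∈ l)).card) ^ 2)
        ≤ ∑ l ∈ L, (if (G.filter (fun p => p ∈ l)).card ≤ (R.filter (fun p => p ∈ l)).card + 2
        ∧ (R.filter (fun p => p ∈ l)).card ≤ (G.filter (fun p => p ∈ l)).card + 2
        ∧ (G.filter (fun p => p ∈ l)).card + (R.filter (fun p => p ∈ l)).card ≤ 4 then (6 : ℤ) else 0) :=
          Finset.sum_le_sum (fun l _ => pointwise_bound _ _)
      _ = _ := by
          rw [← Finset.sum_filter, Finset.sum_const, nsmul_eq_mul, mul_comm]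
  have final : 5 * (2 * (n : ℤ) - k) - (k : ℤ) ^ 2
      ≤ 6 * ((L.filter (fun l =>
        (G.filter (fun p => p ∈ l)).card ≤ (R.filter (fun p => p ∈ l)).card + 2
        ∧ (R.filter (fun p => p ∈ l)).card ≤ (G.filter (fun p => p ∈ l)).card + 2
        ∧ (G.filter (fun p => p ∈ l)).card + (R.filter (fun p => p ∈ l)).card ≤ 4)).card : ℤ) :=
    le_trans main bound
  rw [ge_iff_le, div_le_iff₀ (by norm_num : (0 : ℚ) < 6)]
  have fq : (5 * (2 * (n : ℚ) - k) - (k : ℚ) ^ 2) ≤ 6 * ((L.filter (fun l =>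
        (G.filter (fun p => p ∈ l)).card ≤ (R.filter (fun p => p ∈ l)).card + 2
        ∧ (R.filter (fun p => p ∈ l)).card ≤ (G.filter (fun p => p ∈ l)).card + 2
        ∧ (G.filter (fun p => p ∈ l)).card + (R.filter (fun p => p ∈ l)).card ≤ 4)).card : ℚ) := by
    exact_mod_cast final
  linarith
end
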